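/- arXiv:1904.08204 — 2 statements merged into one kernel-verified Lean document; each statement's English description precedes it below -/
import Mathlib

section
/- For any T ≥ 1 and reals 2 ≤ x ≤ y, we have (1/T) ∫_T^{2T} (Re ∑_{x ≤ p ≤ y, p prime} p^{-1/2-it})² dt = (1/2)·∑_{x ≤ p ≤ y, p prime} 1/p + O(y²/T), with an absolute implied constant. -/
open Complex MeasureTheory

/-- The finite set of primes `p` with `x ≤ p ≤ y`. -/
noncomputable def primesIn (x y : ℝ) : Finset ℕ :=
  (Finset.range (⌊y⌋₊ + 1)).filter fun p => p.Prime ∧ x ≤ (p : ℝ) ∧ (p : ℝ) ≤ y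

lemma sum_rpow_le (N : ℕ) :
    ∑ n ∈ Finset.range (N+1), (n:ℝ) ^ (-(1/2):ℝ) ≤ 2 * Real.sqrt N := by
  induction N with
  | zero => simp
  | succ N ih =>
    rw [Finset.sum_range_succ]
    have ht : Real.sqrt ((N:ℝ)+1) ^ 2 = (N:ℝ)+1 := Real.sq_sqrt (by positivity)
    have hspos : 0 ≤ Real.sqrt N := Real.sqrt_nonneg _
    have htpos : 0 < Real.sqrt ((N:ℝ)+1) := Real.sqrt_pos.2 (by positivity)
    have hb : (↑(N+1):ℝ) ^ (-(1/2):ℝ) = (Real.sqrt ((N:ℝ)+1))⁻¹ := by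
      push_cast
      rw [Real.rpow_neg (by positivity), ← Real.sqrt_eq_rpow]
    rw [hb]
    have h2 : 2 * Real.sqrt N * Real.sqrt ((N:ℝ)+1) ≤ (N:ℝ) + ((N:ℝ)+1) := by
      nlinarith [sq_nonneg (Real.sqrt N - Real.sqrt ((N:ℝ)+1)),
        Real.sq_sqrt (show (0:ℝ) ≤ N by positivity)]
    have hcan : Real.sqrt ((N:ℝ)+1) * (Real.sqrt ((N:ℝ)+1))⁻¹ = 1 := mul_inv_cancel₀ (ne_of_gt htpos)
    have hinv : 0 ≤ (Real.sqrt ((N:ℝ)+1))⁻¹ := by positivity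
    have key : 2 * Real.sqrt N + (Real.sqrt ((N:ℝ)+1))⁻¹ ≤ 2 * Real.sqrt ((N:ℝ)+1) := by
      nlinarith [mul_pos htpos htpos]
    push_cast
    linarith

lemma re_cpow (p : ℕ) (hp : 2 ≤ p) (t : ℝ) :
    ((p:ℂ) ^ (-(1/2:ℂ) - t*Complex.I)).re
      = (p:ℝ) ^ (-(1/2):ℝ) * Real.cos (Real.log p * t) := by
  have hp0 : (0:ℝ) < p := by positivity
  have hne : (p:ℂ) ≠ 0 := by exact_mod_cast hp0.ne'
  rw [Complex.cpow_def_of_ne_zero hne]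
  rw [show Complex.log (p:ℂ) = (Real.log p : ℂ) by
    rw [← Complex.ofReal_natCast, Complex.ofReal_log hp0.le]]
  rw [Complex.exp_re]
  have h1 : ((Real.log p : ℂ) * (-(1/2:ℂ) - t*Complex.I)).re = Real.log p * (-(1/2)) := by
    simp [Complex.mul_re, -Complex.natCast_log]
  have h2 : ((Real.log p : ℂ) * (-(1/2:ℂ) - t*Complex.I)).im = Real.log p * (-t) := by
    simp [Complex.mul_im, -Complex.natCast_log]
  rw [h1, h2]
  rw [Real.rpow_def_of_pos hp0]
  rw [show Real.log p * (-t) = -(Real.log p * t) by ring,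
      Real.cos_neg, show Real.log p * (-(1/2)) = Real.log p * (-(1/2):ℝ) by norm_num]

lemma integral_cos_cos (a b T : ℝ) :
    ∫ t in T..(2*T), Real.cos (a*t) * Real.cos (b*t)
      = ((∫ t in T..(2*T), Real.cos ((a-b)*t)) + ∫ t in T..(2*T), Real.cos ((a+b)*t))/2 := by
  have h : ∀ t : ℝ, Real.cos (a*t) * Real.cos (b*t)
      = (Real.cos ((a-b)*t) + Real.cos ((a+b)*t))/2 := by
    intro t
    rw [show (a-b)*t = a*t - b*t by ring, show (a+b)*t = a*t + b*t by ring,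
        Real.cos_sub, Real.cos_add]
    ring
  simp_rw [h]
  rw [intervalIntegral.integral_div, intervalIntegral.integral_add]
  · exact (Real.continuous_cos.comp (continuous_const.mul continuous_id)).intervalIntegrable _ _
  · exact (Real.continuous_cos.comp (continuous_const.mul continuous_id)).intervalIntegrable _ _

lemma abs_integral_cos_mul_le {c : ℝ} (hc : c ≠ 0) (T : ℝ) :
    |∫ t in T..(2*T), Real.cos (c*t)| ≤ 2/|c| := by
  rw [intervalIntegral.integral_comp_mul_left Real.cos hc, integral_cos]
  rw [smul_eq_mul, abs_mul, abs_inv, div_eq_mul_inv, mul_comm]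
  gcongr
  calc |Real.sin (c * (2*T)) - Real.sin (c * T)| ≤ |Real.sin (c*(2*T))| + |Real.sin (c*T)| :=
        abs_sub _ _
    _ ≤ 1 + 1 := add_le_add (Real.abs_sin_le_one _) (Real.abs_sin_le_one _)
    _ = 2 := by norm_num

lemma diag_bound {L : ℝ} (hL : (1:ℝ)/2 ≤ L) (T : ℝ) :
    |(∫ t in T..(2*T), Real.cos (L*t) * Real.cos (L*t)) - T/2| ≤ 1 := by
  have hLpos : 0 < L := by linarith
  rw [integral_cos_cos]
  have h0 : (∫ t in T..(2*T), Real.cos ((L-L)*t)) = T := by simp; ring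
  rw [h0]
  have h2 : |∫ t in T..(2*T), Real.cos ((L+L)*t)| ≤ 2/|L+L| :=
    abs_integral_cos_mul_le (by positivity) T
  rw [abs_of_pos (by positivity : (0:ℝ) < L+L)] at h2
  have : 2/(L+L) ≤ 2 := by
    rw [div_le_iff₀ (by positivity)]; linarith
  have heq : (T + ∫ t in T..(2*T), Real.cos ((L+L)*t))/2 - T/2
      = (∫ t in T..(2*T), Real.cos ((L+L)*t))/2 := by ring
  rw [heq, abs_div, abs_of_pos (by norm_num : (0:ℝ) < 2)]
  linarith

lemma offdiag_bound {a b : ℝ} (ha : (1:ℝ)/2 ≤ a) (hb : (1:ℝ)/2 ≤ b) (hab : a ≠ b) (T : ℝ) :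
    |∫ t in T..(2*T), Real.cos (a*t) * Real.cos (b*t)| ≤ 1/|a-b| + 1 := by
  rw [integral_cos_cos]
  have h1 : |∫ t in T..(2*T), Real.cos ((a-b)*t)| ≤ 2/|a-b| :=
    abs_integral_cos_mul_le (sub_ne_zero.2 hab) T
  have habpos : (0:ℝ) < a + b := by linarith
  have h2 : |∫ t in T..(2*T), Real.cos ((a+b)*t)| ≤ 2/|a+b| :=
    abs_integral_cos_mul_le (ne_of_gt habpos) T
  rw [abs_of_pos habpos] at h2
  have h2' : 2/(a+b) ≤ 2 := by rw [div_le_iff₀ habpos]; linarith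
  rw [abs_div, abs_of_pos (by norm_num : (0:ℝ) < 2)]
  have := abs_add_le (∫ t in T..(2*T), Real.cos ((a-b)*t)) (∫ t in T..(2*T), Real.cos ((a+b)*t))
  have hd : 2/|a-b| / 2 = 1/|a-b| := by ring
  linarith

lemma log_gap {y : ℝ} {p q : ℕ} (hp : 1 ≤ p) (hpq : p < q) (hqy : (q:ℝ) ≤ y) :
    1/y ≤ Real.log q - Real.log p := by
  have hp0 : (0:ℝ) < p := by exact_mod_cast hp
  have hq0 : (0:ℝ) < q := by exact_mod_cast Nat.lt_of_lt_of_le hp hpq.le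
  have h1 : Real.log ((p:ℝ)/q) ≤ (p:ℝ)/q - 1 := Real.log_le_sub_one_of_pos (by positivity)
  rw [Real.log_div (ne_of_gt hp0) (ne_of_gt hq0)] at h1
  have h2 : (p:ℝ) + 1 ≤ q := by exact_mod_cast hpq
  have h3 : 1/y ≤ 1/(q:ℝ) := one_div_le_one_div_of_le hq0 hqy
  have h4 : ((p:ℝ) + 1)/q ≤ 1 := by rw [div_le_one hq0]; linarith
  rw [add_div] at h4
  linarith

theorem stmt_4 :
    ∃ C : ℝ, 0 < C ∧
      ∀ (T x y : ℝ), 1 ≤ T → 2 ≤ x → x ≤ y →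
        |(1 / T) * (∫ t in T..(2 * T),
              ((∑ p ∈ primesIn x y, (p : ℂ) ^ (-(1 / 2 : ℂ) - t * Complex.I)).re) ^ 2)
            - (1 / 2) * ∑ p ∈ primesIn x y, (1 : ℝ) / p|
          ≤ C * y ^ 2 / T := by
  refine ⟨9, by norm_num, fun T x y hT hx hxy => ?_⟩
  set P := primesIn x y with hPdef
  have hy2 : (2:ℝ) ≤ y := le_trans hx hxy
  have hy0 : (0:ℝ) < y := by linarith
  have hT0 : (0:ℝ) < T := by linarith
  have hmem : ∀ p ∈ P, p.Prime ∧ x ≤ (p:ℝ) ∧ (p:ℝ) ≤ y := fun p hp => (Finset.mem_filter.1 hp).2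
  have hp2 : ∀ p ∈ P, 2 ≤ p := fun p hp => (hmem p hp).1.two_le
  have hp2R : ∀ p ∈ P, (2:ℝ) ≤ (p:ℝ) := fun p hp => by exact_mod_cast hp2 p hp
  have hpy : ∀ p ∈ P, (p:ℝ) ≤ y := fun p hp => (hmem p hp).2.2
  set a : ℕ → ℝ := fun p => (p:ℝ) ^ (-(1/2):ℝ) with ha
  set L : ℕ → ℝ := fun p => Real.log p with hL
  have hanon : ∀ p, 0 ≤ a p := fun p => Real.rpow_nonneg (Nat.cast_nonneg p) _
  have hlog : ∀ p ∈ P, (1:ℝ)/2 ≤ L p := by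
    intro p hp
    have h1 : Real.log 2 ≤ Real.log p := Real.log_le_log (by norm_num) (hp2R p hp)
    have := Real.log_two_gt_d9
    simp only [hL]
    linarith
  -- step 1: real part pointwise
  have hre : ∀ t : ℝ, (∑ p ∈ P, (p:ℂ) ^ (-(1/2:ℂ) - (t:ℂ)*Complex.I)).re
      = ∑ p ∈ P, a p * Real.cos (L p * t) := by
    intro t
    rw [Complex.re_sum]
    exact Finset.sum_congr rfl fun p hp => re_cpow p (hp2 p hp) t
  -- step 2: expand the integral
  set I2 : ℕ → ℕ → ℝ := fun p q => ∫ t in T..(2*T), Real.cos (L p * t) * Real.cos (L q * t)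
    with hI2
  have key : (∫ t in T..(2*T), ((∑ p ∈ P, (p:ℂ) ^ (-(1/2:ℂ) - (t:ℂ)*Complex.I)).re) ^ 2)
      = ∑ p ∈ P, ∑ q ∈ P, (a p * a q) * I2 p q := by
    have h1 : ∀ t : ℝ, ((∑ p ∈ P, (p:ℂ) ^ (-(1/2:ℂ) - (t:ℂ)*Complex.I)).re) ^ 2
        = ∑ p ∈ P, ∑ q ∈ P, (a p * a q) * (Real.cos (L p * t) * Real.cos (L q * t)) := by
      intro t
      rw [hre t, sq, Finset.sum_mul_sum]
      exact Finset.sum_congr rfl fun p _ => Finset.sum_congr rfl fun q _ => by ring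
    rw [intervalIntegral.integral_congr (fun t _ => h1 t)]
    rw [intervalIntegral.integral_finset_sum (fun p _ =>
      (by fun_prop : Continuous fun t => ∑ q ∈ P,
        (a p * a q) * (Real.cos (L p * t) * Real.cos (L q * t))).intervalIntegrable _ _)]
    refine Finset.sum_congr rfl fun p _ => ?_
    rw [intervalIntegral.integral_finset_sum (fun q _ =>
      (by fun_prop : Continuous fun t =>
        (a p * a q) * (Real.cos (L p * t) * Real.cos (L q * t))).intervalIntegrable _ _)]
    exact Finset.sum_congr rfl fun q _ => intervalIntegral.integral_const_mul _ _
  -- a p * a p = 1/p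
  have hap : ∀ p ∈ P, a p * a p = 1/(p:ℝ) := by
    intro p hp
    have hp0 : (0:ℝ) < p := by linarith [hp2R p hp]
    simp only [ha]
    rw [← Real.rpow_add hp0, show (-(1/2) + -(1/2) : ℝ) = -1 by norm_num, Real.rpow_neg_one,
      one_div]
  -- split sum
  have hsplit : ∑ p ∈ P, ∑ q ∈ P, (a p * a q) * I2 p q
      = (∑ p ∈ P, (1/(p:ℝ)) * I2 p p)
        + ∑ p ∈ P, ∑ q ∈ P.erase p, (a p * a q) * I2 p q := by
    rw [← Finset.sum_add_distrib]
    refine Finset.sum_congr rfl fun p hp => ?_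
    rw [← hap p hp]
    exact (Finset.add_sum_erase P (fun q => a p * a q * I2 p q) hp).symm
  -- bounds
  have hcard : (P.card : ℝ) ≤ y + 1 := by
    have h1 : P.card ≤ ⌊y⌋₊ + 1 := by
      calc P.card ≤ (Finset.range (⌊y⌋₊+1)).card := Finset.card_le_card (Finset.filter_subset _ _)
        _ = ⌊y⌋₊ + 1 := Finset.card_range _
    calc (P.card : ℝ) ≤ (⌊y⌋₊:ℝ) + 1 := by exact_mod_cast h1
      _ ≤ y + 1 := by linarith [Nat.floor_le hy0.le]
  have hasum : ∑ p ∈ P, a p ≤ 2 * Real.sqrt y := by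
    calc ∑ p ∈ P, a p ≤ ∑ n ∈ Finset.range (⌊y⌋₊+1), a n :=
          Finset.sum_le_sum_of_subset_of_nonneg (Finset.filter_subset _ _)
            (fun n _ _ => hanon n)
      _ ≤ 2 * Real.sqrt ⌊y⌋₊ := sum_rpow_le _
      _ ≤ 2 * Real.sqrt y := by
          gcongr
          exact Nat.floor_le hy0.le
  -- diagonal error
  have hdiag : |(∑ p ∈ P, (1/(p:ℝ)) * I2 p p) - T/2 * ∑ p ∈ P, (1:ℝ)/p| ≤ y + 1 := by
    have : (∑ p ∈ P, (1/(p:ℝ)) * I2 p p) - T/2 * ∑ p ∈ P, (1:ℝ)/p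
        = ∑ p ∈ P, (1/(p:ℝ)) * (I2 p p - T/2) := by
      rw [Finset.mul_sum, ← Finset.sum_sub_distrib]
      exact Finset.sum_congr rfl fun p _ => by ring
    rw [this]
    calc |∑ p ∈ P, (1/(p:ℝ)) * (I2 p p - T/2)| ≤ ∑ p ∈ P, |(1/(p:ℝ)) * (I2 p p - T/2)| :=
          Finset.abs_sum_le_sum_abs _ _
      _ ≤ ∑ p ∈ P, 1 := by
          refine Finset.sum_le_sum fun p hp => ?_
          rw [abs_mul]
          have hb := diag_bound (hlog p hp) T
          have hp0 : (0:ℝ) < p := by linarith [hp2R p hp]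
          have h1p : |1/(p:ℝ)| ≤ 1 := by
            rw [abs_of_pos (by positivity)]
            rw [div_le_one hp0]; linarith [hp2R p hp]
          calc |1/(p:ℝ)| * |I2 p p - T/2| ≤ 1 * 1 :=
                mul_le_mul h1p hb (abs_nonneg _) (by norm_num)
            _ = 1 := by norm_num
      _ = P.card := by simp
      _ ≤ y + 1 := hcard
  -- off-diagonal error
  have hoff : |∑ p ∈ P, ∑ q ∈ P.erase p, (a p * a q) * I2 p q| ≤ 2*y * (2*Real.sqrt y)^2 := by
    have hIbound : ∀ p ∈ P, ∀ q ∈ P.erase p, |I2 p q| ≤ 2*y := by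
      intro p hp q hq
      have hqP : q ∈ P := Finset.mem_of_mem_erase hq
      have hne : q ≠ p := Finset.ne_of_mem_erase hq
      have hLne : L p ≠ L q := by
        rcases lt_or_gt_of_ne (Ne.symm hne) with h | h
        · have := log_gap (le_trans (by norm_num) (hp2 p hp)) h (hpy q hqP)
          intro hEq; simp only [hL] at hEq; rw [hEq] at this
          have : 1/y ≤ 0 := by linarith
          have : (0:ℝ) < 1/y := by positivity
          linarith
        · have := log_gap (le_trans (by norm_num) (hp2 q hqP)) h (hpy p hp)
          intro hEq; simp only [hL] at hEq; rw [hEq] at this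
          have : 1/y ≤ 0 := by linarith
          have : (0:ℝ) < 1/y := by positivity
          linarith
      have hgap : 1/y ≤ |L p - L q| := by
        rcases lt_or_gt_of_ne (Ne.symm hne) with h | h
        · have hg := log_gap (le_trans (by norm_num) (hp2 p hp)) h (hpy q hqP)
          calc 1/y ≤ Real.log q - Real.log p := hg
            _ ≤ |L p - L q| := by
                rw [abs_sub_comm]
                exact le_abs_self _
        · have hg := log_gap (le_trans (by norm_num) (hp2 q hqP)) h (hpy p hp)
          calc 1/y ≤ Real.log p - Real.log q := hg
            _ ≤ |L p - L q| := le_abs_self _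
      have hb := offdiag_bound (hlog p hp) (hlog q hqP) hLne T
      have habs : 1/|L p - L q| ≤ y := by
        calc 1/|L p - L q| ≤ 1/(1/y) := by
              apply one_div_le_one_div_of_le (by positivity) hgap
          _ = y := one_div_one_div y
      calc |I2 p q| ≤ 1/|L p - L q| + 1 := hb
        _ ≤ y + 1 := by linarith
        _ ≤ 2*y := by linarith
    calc |∑ p ∈ P, ∑ q ∈ P.erase p, (a p * a q) * I2 p q|
        ≤ ∑ p ∈ P, |∑ q ∈ P.erase p, (a p * a q) * I2 p q| := Finset.abs_sum_le_sum_abs _ _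
      _ ≤ ∑ p ∈ P, ∑ q ∈ P.erase p, |(a p * a q) * I2 p q| :=
          Finset.sum_le_sum fun p _ => Finset.abs_sum_le_sum_abs _ _
      _ ≤ ∑ p ∈ P, ∑ q ∈ P.erase p, (a p * a q) * (2*y) := by
          refine Finset.sum_le_sum fun p hp => Finset.sum_le_sum fun q hq => ?_
          rw [abs_mul, _root_.abs_of_nonneg (mul_nonneg (hanon p) (hanon q))]
          exact mul_le_mul_of_nonneg_left (hIbound p hp q hq)
            (mul_nonneg (hanon p) (hanon q))
      _ ≤ ∑ p ∈ P, ∑ q ∈ P, (a p * a q) * (2*y) := by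
          refine Finset.sum_le_sum fun p _ => ?_
          refine Finset.sum_le_sum_of_subset_of_nonneg (Finset.erase_subset _ _)
            fun q _ _ => by positivity
      _ = (∑ p ∈ P, a p) * (∑ q ∈ P, a q) * (2*y) := by
          rw [Finset.sum_mul_sum]
          rw [Finset.sum_mul]
          refine Finset.sum_congr rfl fun p _ => ?_
          rw [Finset.sum_mul]
      _ ≤ (2*Real.sqrt y) * (2*Real.sqrt y) * (2*y) := by
          have h0 : 0 ≤ ∑ p ∈ P, a p := Finset.sum_nonneg fun p _ => hanon p
          gcongr
      _ = 2*y * (2*Real.sqrt y)^2 := by ring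
  -- combine
  have hsq : (2*Real.sqrt y)^2 = 4*y := by
    rw [mul_pow, Real.sq_sqrt hy0.le]; ring
  have hE : |(∑ p ∈ P, ∑ q ∈ P, (a p * a q) * I2 p q) - T/2 * ∑ p ∈ P, (1:ℝ)/p| ≤ 9*y^2 := by
    rw [hsplit]
    have h1 := hdiag
    have h2 := hoff
    rw [hsq] at h2
    have htri := abs_add_le ((∑ p ∈ P, (1/(p:ℝ)) * I2 p p) - T/2 * ∑ p ∈ P, (1:ℝ)/p)
      (∑ p ∈ P, ∑ q ∈ P.erase p, (a p * a q) * I2 p q)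
    have hy1 : y + 1 ≤ y^2 := by nlinarith
    have h8 : 2*y*(4*y) = 8*y^2 := by ring
    have : (∑ p ∈ P, (1/(p:ℝ)) * I2 p p) + (∑ p ∈ P, ∑ q ∈ P.erase p, (a p * a q) * I2 p q)
        - T/2 * ∑ p ∈ P, (1:ℝ)/p
        = ((∑ p ∈ P, (1/(p:ℝ)) * I2 p p) - T/2 * ∑ p ∈ P, (1:ℝ)/p)
          + (∑ p ∈ P, ∑ q ∈ P.erase p, (a p * a q) * I2 p q) := by ring
    rw [this]
    calc |_ + _| ≤ _ := htri
      _ ≤ (y+1) + 2*y*(4*y) := add_le_add h1 h2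
      _ ≤ 9*y^2 := by nlinarith
  -- final
  rw [key]
  have hfinal : (1/T) * (∑ p ∈ P, ∑ q ∈ P, (a p * a q) * I2 p q) - (1/2) * ∑ p ∈ P, (1:ℝ)/p
      = (1/T) * ((∑ p ∈ P, ∑ q ∈ P, (a p * a q) * I2 p q) - T/2 * ∑ p ∈ P, (1:ℝ)/p) := by
    field_simp
  rw [hfinal, abs_mul, abs_of_pos (by positivity : (0:ℝ) < 1/T)]
  calc (1/T) * |_| ≤ (1/T) * (9*y^2) := by gcongr
    _ = 9 * y^2 / T := by ring
end

section
/- Let f : ℝ → ℂ be continuously differentiable on an interval [a, b] with b − a ≥ δ > 0. Then max_{t ∈ [a,b]} |f(t)|² ≤ (1/δ)∫_a^b |f(t)|² dt + 2 (∫_a^b |f(t)|² dt)^{1/2} (∫_a^b |f'(t)|² dt)^{1/2}. -/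
open Complex MeasureTheory

lemma deriv_sq_abs {f : ℝ → ℂ} {c : ℂ} {t : ℝ} (hfd : HasDerivAt f c t) :
    HasDerivAt (fun x => ‖f x‖ ^ 2) (2 * ((starRingEnd ℂ) (f t) * c).re) t := by
  have hre : HasDerivAt (fun x => (f x).re) c.re t :=
    (Complex.reCLM.hasFDerivAt.comp_hasDerivAt t hfd)
  have him : HasDerivAt (fun x => (f x).im) c.im t :=
    (Complex.imCLM.hasFDerivAt.comp_hasDerivAt t hfd)
  have h : HasDerivAt (fun x => (f x).re * (f x).re + (f x).im * (f x).im) _ t :=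
    (hre.mul hre).add (him.mul him)
  have heq : (fun x => ‖f x‖ ^ 2) =
      fun x => (f x).re * (f x).re + (f x).im * (f x).im := by
    funext x; rw [Complex.sq_norm, Complex.normSq_apply]
  rw [heq]
  convert h using 1
  simp [Complex.mul_re, Complex.conj_re, Complex.conj_im]
  ring

theorem stmt_13 (f : ℝ → ℂ) (a b δ : ℝ) (hδ : 0 < δ) (hab : δ ≤ b - a)
    (hf : ContDiffOn ℝ 1 f (Set.Icc a b)) :
    ∀ t ∈ Set.Icc a b,
      ‖f t‖ ^ 2
        ≤ (1 / δ) * (∫ s in a..b, ‖f s‖ ^ 2)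
          + 2 * Real.sqrt (∫ s in a..b, ‖f s‖ ^ 2)
              * Real.sqrt (∫ s in a..b, ‖derivWithin f (Set.Icc a b) s‖ ^ 2) := by
  intro t₀ ht₀
  have hab' : a < b := by linarith
  have huniq : UniqueDiffOn ℝ (Set.Icc a b) := uniqueDiffOn_Icc hab'
  set F' := fun u => derivWithin f (Set.Icc a b) u with hF'
  have hfc : ContinuousOn f (Set.Icc a b) := hf.continuousOn
  have hF'c : ContinuousOn F' (Set.Icc a b) := hf.continuousOn_derivWithin huniq le_rfl
  set g := fun u => ‖f u‖ ^ 2 with hgdef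
  set h := fun u => 2 * ((starRingEnd ℂ) (f u) * F' u).re with hhdef
  have hgc : ContinuousOn g (Set.Icc a b) :=
    (continuous_norm.comp_continuousOn hfc).pow 2
  have hhc : ContinuousOn h (Set.Icc a b) := by
    apply continuousOn_const.mul
    exact Complex.continuous_re.comp_continuousOn
      ((Complex.continuous_conj.comp_continuousOn hfc).mul hF'c)
  -- derivative at interior points
  have key : ∀ u ∈ Set.Ioo a b, HasDerivAt g (h u) u := by
    intro u hu
    have hmem : Set.Icc a b ∈ nhds u := Icc_mem_nhds hu.1 hu.2
    have hd : HasDerivAt f (F' u) u :=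
      ((hf.differentiableOn one_ne_zero u (Set.Ioo_subset_Icc_self hu)).hasDerivWithinAt).hasDerivAt hmem
    exact deriv_sq_abs hd
  -- integrabilities
  have hint_h : IntervalIntegrable h volume a b := by
    apply ContinuousOn.intervalIntegrable
    rwa [Set.uIcc_of_le hab'.le]
  have hint_habs : IntervalIntegrable (fun u => |h u|) volume a b := hint_h.abs
  have hint_g : IntervalIntegrable g volume a b := by
    apply ContinuousOn.intervalIntegrable
    rwa [Set.uIcc_of_le hab'.le]
  -- FTC
  have ftc : ∀ c ∈ Set.Icc a b, ∀ d ∈ Set.Icc a b, c ≤ d →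
      ∫ u in c..d, h u = g d - g c := by
    intro c hc d hd hcd
    apply intervalIntegral.integral_eq_sub_of_hasDeriv_right_of_le hcd
    · exact hgc.mono (Set.Icc_subset_Icc hc.1 hd.2)
    · intro u hu
      exact (key u ⟨lt_of_le_of_lt hc.1 hu.1, lt_of_lt_of_le hu.2 hd.2⟩).hasDerivWithinAt
    · exact hint_h.mono_set (Set.uIcc_subset_uIcc
        (by rw [Set.uIcc_of_le hab'.le]; exact hc)
        (by rw [Set.uIcc_of_le hab'.le]; exact hd))
  -- minimum point
  obtain ⟨c, hcs, hcmin⟩ := isCompact_Icc.exists_isMinOn (Set.nonempty_Icc.2 hab'.le) hgc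
  have hcmin' : ∀ u ∈ Set.Icc a b, g c ≤ g u := fun u hu => hcmin hu
  set I := ∫ u in a..b, g u with hI
  set H := ∫ u in a..b, |h u| with hH
  have hInn : 0 ≤ I := intervalIntegral.integral_nonneg hab'.le (fun u _ => by positivity)
  -- g c ≤ (1/δ) * I
  have hgc_le : g c ≤ (1 / δ) * I := by
    have h1 : g c * (b - a) ≤ I := by
      have := intervalIntegral.integral_mono_on hab'.le (intervalIntegrable_const (c := g c))
        hint_g (fun u hu => hcmin' u hu)
      simpa [intervalIntegral.integral_const, smul_eq_mul, mul_comm] using this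
    have h2 : g c * δ ≤ g c * (b - a) := by
      have : (0:ℝ) ≤ g c := by positivity
      nlinarith
    rw [one_div_mul_eq_div]
    rw [le_div_iff₀ hδ]
    linarith
  -- |g t₀ - g c| ≤ H
  have hdiff : g t₀ ≤ g c + H := by
    rcases le_total c t₀ with hct | hct
    · have := ftc c hcs t₀ ht₀ hct
      have habs : ∫ u in c..t₀, h u ≤ ∫ u in c..t₀, |h u| :=
        (le_abs_self _).trans (intervalIntegral.abs_integral_le_integral_abs hct)
      have hmono : (∫ u in c..t₀, |h u|) ≤ H :=
        intervalIntegral.integral_mono_interval hcs.1 hct ht₀.2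
          (Filter.Eventually.of_forall fun u => abs_nonneg _) hint_habs
      linarith
    · have := ftc t₀ ht₀ c hcs hct
      have hmono : (∫ u in t₀..c, |h u|) ≤ H :=
        intervalIntegral.integral_mono_interval ht₀.1 hct hcs.2
          (Filter.Eventually.of_forall fun u => abs_nonneg _) hint_habs
      have habs : -(∫ u in t₀..c, h u) ≤ H :=
        (neg_le_abs _).trans ((intervalIntegral.abs_integral_le_integral_abs hct).trans hmono)
      linarith
  -- Hölder step
  set K := ∫ u in a..b, ‖F' u‖ ^ 2 with hK
  have hKnn : 0 ≤ K := intervalIntegral.integral_nonneg hab'.le (fun u _ => by positivity)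
  have hHle : H ≤ 2 * Real.sqrt I * Real.sqrt K := by
    have hpt : ∀ u, |h u| ≤ 2 * (‖f u‖ * ‖F' u‖) := by
      intro u
      have h1 : |((starRingEnd ℂ) (f u) * F' u).re| ≤ ‖(starRingEnd ℂ) (f u) * F' u‖ :=
        Complex.abs_re_le_norm _
      have h2 : ‖(starRingEnd ℂ) (f u) * F' u‖
          = ‖f u‖ * ‖F' u‖ := by
        rw [norm_mul, Complex.norm_conj]
      calc |h u| = 2 * |((starRingEnd ℂ) (f u) * F' u).re| := by
            rw [hhdef, abs_mul]; norm_num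
        _ ≤ _ := by rw [← h2]; linarith
    have hcprod : ContinuousOn (fun u => ‖f u‖ * ‖F' u‖) (Set.Icc a b) :=
      (continuous_norm.comp_continuousOn hfc).mul
        (continuous_norm.comp_continuousOn hF'c)
    have hint_prod : IntervalIntegrable
        (fun u => 2 * (‖f u‖ * ‖F' u‖)) volume a b := by
      apply ContinuousOn.intervalIntegrable
      rw [Set.uIcc_of_le hab'.le]
      exact continuousOn_const.mul hcprod
    have step1 : H ≤ ∫ u in a..b, 2 * (‖f u‖ * ‖F' u‖) :=
      intervalIntegral.integral_mono_on hab'.le hint_habs hint_prod (fun u _ => hpt u)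
    have step2 : (∫ u in a..b, 2 * (‖f u‖ * ‖F' u‖))
        = 2 * ∫ u in Set.Ioc a b, ‖f u‖ * ‖F' u‖ := by
      rw [intervalIntegral.integral_of_le hab'.le, integral_const_mul]
    have hpq : Real.HolderConjugate 2 2 := Real.HolderConjugate.two_two
    have hmeasf : AEStronglyMeasurable (fun u => ‖f u‖)
        (volume.restrict (Set.Ioc a b)) :=
      ((continuous_norm.comp_continuousOn hfc).mono
        Set.Ioc_subset_Icc_self).aestronglyMeasurable measurableSet_Ioc
    have hmeasF : AEStronglyMeasurable (fun u => ‖F' u‖)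
        (volume.restrict (Set.Ioc a b)) :=
      ((continuous_norm.comp_continuousOn hF'c).mono
        Set.Ioc_subset_Icc_self).aestronglyMeasurable measurableSet_Ioc
    have hintsqf : Integrable (fun u => ‖f u‖ ^ 2)
        (volume.restrict (Set.Ioc a b)) :=
      (intervalIntegrable_iff_integrableOn_Ioc_of_le hab'.le).1 hint_g
    have hint_K : IntervalIntegrable (fun u => ‖F' u‖ ^ 2) volume a b := by
      apply ContinuousOn.intervalIntegrable
      rw [Set.uIcc_of_le hab'.le]
      exact (continuous_norm.comp_continuousOn hF'c).pow 2
    have hintsqF : Integrable (fun u => ‖F' u‖ ^ 2)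
        (volume.restrict (Set.Ioc a b)) :=
      (intervalIntegrable_iff_integrableOn_Ioc_of_le hab'.le).1 hint_K
    have hmemf : MemLp (fun u => ‖f u‖) (ENNReal.ofReal 2)
        (volume.restrict (Set.Ioc a b)) := by
      rw [show ENNReal.ofReal 2 = 2 by norm_num]
      exact (memLp_two_iff_integrable_sq hmeasf).2 hintsqf
    have hmemF : MemLp (fun u => ‖F' u‖) (ENNReal.ofReal 2)
        (volume.restrict (Set.Ioc a b)) := by
      rw [show ENNReal.ofReal 2 = 2 by norm_num]
      exact (memLp_two_iff_integrable_sq hmeasF).2 hintsqF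
    have hold := integral_mul_le_Lp_mul_Lq_of_nonneg hpq
      (Filter.Eventually.of_forall fun u => norm_nonneg _)
      (Filter.Eventually.of_forall fun u => norm_nonneg _) hmemf hmemF
    have hcast : ∀ φ : ℝ → ℂ, (∫ u in Set.Ioc a b, ‖φ u‖ ^ (2:ℝ))
        = ∫ u in Set.Ioc a b, ‖φ u‖ ^ 2 := by
      intro φ
      apply integral_congr_ae
      apply Filter.Eventually.of_forall
      intro u
      show ‖φ u‖ ^ (2:ℝ) = ‖φ u‖ ^ 2
      rw [show ((2:ℝ)) = ((2:ℕ):ℝ) by norm_num, Real.rpow_natCast]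
    rw [hcast f, hcast F'] at hold
    have hIeq : I = ∫ u in Set.Ioc a b, ‖f u‖ ^ 2 :=
      intervalIntegral.integral_of_le hab'.le
    have hKeq : K = ∫ u in Set.Ioc a b, ‖F' u‖ ^ 2 :=
      intervalIntegral.integral_of_le hab'.le
    rw [← hIeq, ← hKeq] at hold
    rw [← Real.sqrt_eq_rpow, ← Real.sqrt_eq_rpow] at hold
    calc H ≤ _ := step1
      _ = 2 * ∫ u in Set.Ioc a b, ‖f u‖ * ‖F' u‖ := step2
      _ ≤ 2 * (Real.sqrt I * Real.sqrt K) := by linarith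
      _ = 2 * Real.sqrt I * Real.sqrt K := by ring
  calc ‖f t₀‖ ^ 2 = g t₀ := rfl
    _ ≤ g c + H := hdiff
    _ ≤ 1 / δ * I + 2 * Real.sqrt I * Real.sqrt K := by linarith
end
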